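/- Let Q be symmetric positive definite with Q(−R(I−pe')) + (−(I−ep')R')Q ⪯ 0, where R(I−pe') has a simple zero eigenvalue with left eigenvector e' and R is invertible. If the symmetric PSD matrix S = −[Q(−R(I−pe')) + (−(I−ep')R')Q] satisfies p'Sp = 0, then Sp = 0, i.e., p'[Q(−R(I−pe')) + (−(I−ep')R')Q] = 0'. Consequently p'Q = b·e'R^{-1} for some nonzero scalar b. -/

import Mathlib

open Matrix

/-- Let `R` be invertible, `p` a vector with `e'p = 1`, and `Q` symmetric positive
definite with `S := −[Q(−R(I−pe')) + (−(I−ep')R')Q]` positive semidefinite. Assume the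
only left eigenvectors of `I − pe'` for the eigenvalue `0` are the scalar multiples of
`e'`. If `p'Sp = 0` then `p'S = 0'`, i.e. `p'[Q(−R(I−pe')) + (−(I−ep')R')Q] = 0'`;
consequently `p'Q = b·e'R⁻¹` for some nonzero scalar `b`. -/
theorem left_kernel_pQ {K : ℕ} (R Q : Matrix (Fin K) (Fin K) ℝ)
    (p : Fin K → ℝ) (hp1 : ∑ i, p i = 1) (hRinv : IsUnit R.det)
    (hQsymm : Q.IsSymm) (hQ : Q.PosDef)
    (hS : (-(Q * (-(R * ((1:Matrix (Fin K) (Fin K) ℝ)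
            - Matrix.vecMulVec p (fun _ => (1:ℝ)))))
          + (-(((1:Matrix (Fin K) (Fin K) ℝ)
            - Matrix.vecMulVec (fun _ => (1:ℝ)) p) * Rᵀ)) * Q)).PosSemidef)
    (hsimple : ∀ v : Fin K → ℝ,
      Matrix.vecMul v ((1:Matrix (Fin K) (Fin K) ℝ)
        - Matrix.vecMulVec p (fun _ => (1:ℝ))) = 0 →
      ∃ c : ℝ, v = fun _ => c)
    (hpSp : dotProduct p
      ((-(Q * (-(R * ((1:Matrix (Fin K) (Fin K) ℝ)
            - Matrix.vecMulVec p (fun _ => (1:ℝ)))))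
          + (-(((1:Matrix (Fin K) (Fin K) ℝ)
            - Matrix.vecMulVec (fun _ => (1:ℝ)) p) * Rᵀ)) * Q)) *ᵥ p) = 0) :
    Matrix.vecMul p (Q * (-(R * ((1:Matrix (Fin K) (Fin K) ℝ)
          - Matrix.vecMulVec p (fun _ => (1:ℝ)))))
        + (-(((1:Matrix (Fin K) (Fin K) ℝ)
          - Matrix.vecMulVec (fun _ => (1:ℝ)) p) * Rᵀ)) * Q) = 0 ∧
    ∃ b : ℝ, b ≠ 0 ∧
      Matrix.vecMul p Q = b • Matrix.vecMul (fun _ => (1:ℝ)) R⁻¹ := by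
  set M : Matrix (Fin K) (Fin K) ℝ :=
    (1:Matrix (Fin K) (Fin K) ℝ) - Matrix.vecMulVec p (fun _ => (1:ℝ)) with hM
  set N : Matrix (Fin K) (Fin K) ℝ :=
    (1:Matrix (Fin K) (Fin K) ℝ) - Matrix.vecMulVec (fun _ => (1:ℝ)) p with hN
  set S : Matrix (Fin K) (Fin K) ℝ :=
    -(Q * (-(R * M)) + (-(N * Rᵀ)) * Q) with hSdef
  -- S *ᵥ p = 0
  have hSp : S *ᵥ p = 0 := by
    have := (hS.dotProduct_mulVec_zero_iff p).mp ?_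
    · exact this
    · simpa using hpSp
  have hMp : M *ᵥ p = 0 := by
    ext i
    simp [hM, Matrix.sub_mulVec, mulVec, dotProduct, vecMulVec_apply,
      sub_mul, Finset.sum_sub_distrib, Matrix.one_apply, ← Finset.mul_sum, hp1]
  -- S = Q*R*M + N*Rᵀ*Q
  have hSalt : S = Q * R * M + N * Rᵀ * Q := by
    rw [hSdef]; noncomm_ring
  have hNx : N *ᵥ (Rᵀ *ᵥ (Q *ᵥ p)) = 0 := by
    have h1 : (Q * R * M) *ᵥ p = 0 := by
      rw [← Matrix.mulVec_mulVec, hMp, Matrix.mulVec_zero]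
    have h2 := hSp
    rw [hSalt, Matrix.add_mulVec, h1, zero_add] at h2
    rw [← Matrix.mulVec_mulVec, ← Matrix.mulVec_mulVec] at h2
    exact h2
  -- transpose relation: N = Mᵀ
  have hNT : N = Mᵀ := by
    ext i j
    simp [hM, hN, Matrix.one_apply, vecMulVec_apply, eq_comm]
  have hvm : Matrix.vecMul (Rᵀ *ᵥ (Q *ᵥ p)) M = 0 := by
    rw [← Matrix.mulVec_transpose, ← hNT]; exact hNx
  obtain ⟨c, hc⟩ := hsimple _ hvm
  -- S is symmetric (Hermitian)
  have hSherm : Sᵀ = S := by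
    have := hS.1
    simpa [Matrix.IsHermitian] using this
  have hpS : Matrix.vecMul p S = 0 := by
    rw [← Matrix.mulVec_transpose, hSherm, hSp]
  constructor
  · have : Matrix.vecMul p (-S) = 0 := by
      rw [Matrix.vecMul_neg, hpS, neg_zero]
    simpa [hSdef] using this
  · -- Rᵀ *ᵥ (Q *ᵥ p) = fun _ => c
    have hQp : Q *ᵥ p = c • ((Rᵀ)⁻¹ *ᵥ (fun _ => (1:ℝ))) := by
      have hRTinv : IsUnit (Rᵀ).det := by simpa using hRinv
      have : (Rᵀ)⁻¹ *ᵥ (Rᵀ *ᵥ (Q *ᵥ p)) = (Rᵀ)⁻¹ *ᵥ (fun _ => c) := by rw [hc]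
      rw [Matrix.mulVec_mulVec, Matrix.nonsing_inv_mul _ hRTinv, Matrix.one_mulVec] at this
      rw [this]
      have : (fun _ : Fin K => c) = c • (fun _ : Fin K => (1:ℝ)) := by ext i; simp
      rw [this, Matrix.mulVec_smul]
    have hcne : c ≠ 0 := by
      intro hc0
      have hQp0 : Q *ᵥ p = 0 := by rw [hQp, hc0, zero_smul]
      have hp0 : p = 0 := by
        by_contra hne
        have := hQ.dotProduct_mulVec_pos hne
        rw [hQp0] at this
        simp at this
      rw [hp0] at hp1
      simp at hp1
    refine ⟨c, hcne, ?_⟩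
    have hvmQ : Matrix.vecMul p Q = Q *ᵥ p := by
      rw [← Matrix.mulVec_transpose, hQsymm.eq]
    rw [hvmQ, hQp, ← Matrix.mulVec_transpose, Matrix.transpose_nonsing_inv]
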